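/- Let p be a prime, let F = Q(ξ_p)(X) be the rational function field in one variable X over the p-th cyclotomic field Q(ξ_p), and let K = F(X^{1/p}) be obtained by adjoining a p-th root of X. Then K/F is a cyclic Galois extension of degree p and ξ_p ∉ N_{K/F}(K×); that is, m(K/F) = 0. -/

import Mathlib

open Polynomial

set_option maxHeartbeats 2000000
set_option synthInstance.maxHeartbeats 400000

lemma aux_intDegree {L : Type*} [Field L] (b : RatFunc L) (hb : b ≠ 0) (n : ℕ) :
    (b ^ n).intDegree = n * b.intDegree := by
  induction n with
  | zero => simp [RatFunc.intDegree_one]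
  | succ n ih =>
    rw [pow_succ, RatFunc.intDegree_mul (pow_ne_zero _ hb) hb, ih]
    push_cast; ring

lemma aux_factor {R : Type*} [Field R] (P : R[X]) (hP : P ≠ 0) :
    ∃ (k : ℕ) (Q : R[X]), Q.eval 0 ≠ 0 ∧ P = X ^ k * Q := by
  suffices H : ∀ (n : ℕ) (P : R[X]), P ≠ 0 → P.natDegree = n →
      ∃ (k : ℕ) (Q : R[X]), Q.eval 0 ≠ 0 ∧ P = X ^ k * Q from H P.natDegree P hP rfl
  intro n
  induction n using Nat.strong_induction_on with
  | _ n ih =>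
    intro P hP hdeg
    by_cases h0 : P.eval 0 = 0
    · have hdvd : (X : R[X]) ∣ P := Polynomial.X_dvd_iff.mpr
        (by rwa [Polynomial.coeff_zero_eq_eval_zero])
      obtain ⟨Q', hQ'⟩ := hdvd
      have hQ'0 : Q' ≠ 0 := by rintro rfl; rw [mul_zero] at hQ'; exact hP hQ'
      have hdeg' : Q'.natDegree < n := by
        subst hdeg
        rw [hQ', natDegree_mul X_ne_zero hQ'0, natDegree_X]
        omega
      obtain ⟨k, Q, hQ, hfact⟩ := ih _ hdeg' Q' hQ'0 rfl
      exact ⟨k + 1, Q, hQ, by rw [hQ', hfact]; ring⟩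
    · exact ⟨0, P, h0, by rw [pow_zero, one_mul]⟩

lemma aux_cancel {R : Type*} [Field R] (a b : ℕ) (A B : R[X])
    (hA : A.eval 0 ≠ 0) (hB : B.eval 0 ≠ 0) (h : X ^ a * A = X ^ b * B) :
    a = b ∧ A = B := by
  rcases lt_trichotomy a b with hab | hab | hab
  · exfalso
    have h2 : X ^ a * A = X ^ a * (X ^ (b - a) * B) := by
      rw [h, ← mul_assoc, ← pow_add]
      congr 2
      omega
    have h3 : A = X ^ (b - a) * B := mul_left_cancel₀ (pow_ne_zero _ X_ne_zero) h2
    apply hA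
    rw [h3, eval_mul, eval_pow, eval_X, zero_pow (by omega), zero_mul]
  · refine ⟨hab, ?_⟩
    subst hab
    exact mul_left_cancel₀ (pow_ne_zero _ X_ne_zero) h
  · exfalso
    have h2 : X ^ b * (X ^ (a - b) * A) = X ^ b * B := by
      rw [← h, ← mul_assoc, ← pow_add]
      congr 2
      omega
    have h3 : X ^ (a - b) * A = B := mul_left_cancel₀ (pow_ne_zero _ X_ne_zero) h2
    apply hB
    rw [← h3, eval_mul, eval_pow, eval_X, zero_pow (by omega), zero_mul]


lemma aux_not_pow (p : ℕ) (hp : p.Prime)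
    (ζ : CyclotomicField p ℚ) (hζ : IsPrimitiveRoot ζ p)
    (t : CyclotomicField p ℚ) (ht : t ^ p = ζ) : False := by
  haveI : NeZero ((p : ℚ)) := ⟨Nat.cast_ne_zero.mpr hp.pos.ne'⟩
  have hp2 : 0 < p ^ 2 := pow_pos hp.pos 2
  have htp2 : t ^ (p ^ 2) = 1 := by
    rw [pow_two, pow_mul, ht, hζ.pow_eq_one]
  have hd : orderOf t ∣ p ^ 2 := orderOf_dvd_of_pow_eq_one htp2
  have hnd : ¬ orderOf t ∣ p := by
    intro h
    have h1 : t ^ p = 1 := orderOf_dvd_iff_pow_eq_one.mp h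
    exact hζ.ne_one hp.one_lt (ht ▸ h1)
  have hord : orderOf t = p ^ 2 := by
    obtain ⟨i, hi, hh⟩ := (Nat.dvd_prime_pow hp).mp hd
    interval_cases i
    · exact absurd (hh ▸ one_dvd p) hnd
    · exact absurd (hh ▸ (dvd_refl (p^1)).trans (by rw [pow_one])) hnd
    · exact hh
  have hprim : IsPrimitiveRoot t (p ^ 2) := hord ▸ IsPrimitiveRoot.orderOf t
  have hirr : Irreducible (cyclotomic (p ^ 2) ℚ) := cyclotomic.irreducible_rat hp2
  have haev : (aeval t) (cyclotomic (p ^ 2) ℚ) = 0 := by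
    rw [aeval_def, ← eval_map, map_cyclotomic]
    exact (hprim.isRoot_cyclotomic hp2).eq_zero
  have hmin : minpoly ℚ t = cyclotomic (p ^ 2) ℚ :=
    (minpoly.eq_of_irreducible_of_monic hirr haev (cyclotomic.monic _ _)).symm
  haveI : NeZero p := ⟨hp.pos.ne'⟩
  haveI : NeZero ((p : ℕ) : ℚ) := ⟨Nat.cast_ne_zero.mpr hp.pos.ne'⟩
  haveI : IsCyclotomicExtension {p} ℚ (CyclotomicField p ℚ) :=
    CyclotomicField.isCyclotomicExtension _ _
  have hfin : FiniteDimensional ℚ (CyclotomicField p ℚ) :=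
    IsCyclotomicExtension.finiteDimensional (S := {p}) ℚ _
  have hle : (minpoly ℚ t).natDegree ≤ Module.finrank ℚ (CyclotomicField p ℚ) :=
    minpoly.natDegree_le t
  rw [hmin, natDegree_cyclotomic] at hle
  have hfr : Module.finrank ℚ (CyclotomicField p ℚ) = (p : ℕ).totient := by
    have h2 := IsCyclotomicExtension.finrank (n := p)
      (CyclotomicField p ℚ) (cyclotomic.irreducible_rat (by exact_mod_cast hp.pos))
    simpa using h2
  rw [hfr, Nat.totient_prime_pow hp (by norm_num), Nat.totient_prime hp, pow_one] at hle
  have h1 : 1 ≤ p - 1 := Nat.le_sub_one_of_lt hp.one_lt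
  have h2 : p ≤ 1 := Nat.le_of_mul_le_mul_right
    (by simpa using hle) (by omega)
  omega

/-- Let `p` be a prime, let `F = ℚ(ξ_p)(X)` be the rational function
field in one variable over the `p`-th cyclotomic field, and let `K = F(X^{1/p})` be
obtained by adjoining a `p`-th root `u` of `X` (i.e. `K/F` is generated by an element
`u` with `u^p = X`).  Then `K/F` is a cyclic Galois extension of degree `p`, and for
every primitive `p`-th root of unity `ζ ∈ F` one has `ζ ∉ N_{K/F}(K×)`; that is,
`m(K/F) = 0`. -/
theorem statement5 (p : ℕ) (hp : p.Prime) (K : Type) [Field K]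
    [Algebra (RatFunc (CyclotomicField p ℚ)) K]
    (u : K)
    (hu : u ^ p = algebraMap (RatFunc (CyclotomicField p ℚ)) K RatFunc.X)
    (hgen : IntermediateField.adjoin (RatFunc (CyclotomicField p ℚ)) {u} = ⊤) :
    IsGalois (RatFunc (CyclotomicField p ℚ)) K ∧
    Module.finrank (RatFunc (CyclotomicField p ℚ)) K = p ∧
    IsCyclic (K ≃ₐ[RatFunc (CyclotomicField p ℚ)] K) ∧
    (∃ ζ : RatFunc (CyclotomicField p ℚ), IsPrimitiveRoot ζ p) ∧
    ∀ ζ : RatFunc (CyclotomicField p ℚ), IsPrimitiveRoot ζ p →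
      ¬ ∃ x : K, Algebra.norm (RatFunc (CyclotomicField p ℚ)) x = ζ := by
  haveI : NeZero p := ⟨hp.pos.ne'⟩
  set L := CyclotomicField p ℚ with hLdef
  set F := RatFunc L with hFdef
  -- primitive root in L and F
  haveI : NeZero ((p : ℕ) : ℚ) := ⟨Nat.cast_ne_zero.mpr hp.pos.ne'⟩
  haveI : IsCyclotomicExtension {p} ℚ L :=
    CyclotomicField.isCyclotomicExtension _ _
  obtain ⟨ζ', hζ'⟩ : ∃ ζ' : L, IsPrimitiveRoot ζ' p := by
    obtain ⟨r, hr⟩ := IsCyclotomicExtension.exists_isPrimitiveRoot ℚ L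
      (Set.mem_singleton p) hp.pos.ne'
    exact ⟨r, by simpa using hr⟩
  have hζ0 : IsPrimitiveRoot (algebraMap L F ζ') p :=
    hζ'.map_of_injective (algebraMap L F).injective
  have hζmem : (algebraMap L F ζ') ∈ primitiveRoots p F :=
    (mem_primitiveRoots hp.pos).mpr hζ0
  have hζne : (primitiveRoots p F).Nonempty := ⟨_, hζmem⟩
  -- X is not a p-th power in F
  have hX : ∀ b : F, b ^ p ≠ RatFunc.X := by
    intro b hb
    rcases eq_or_ne b 0 with rfl | hb0
    · rw [zero_pow hp.pos.ne'] at hb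
      exact RatFunc.X_ne_zero hb.symm
    · have h1 := congrArg RatFunc.intDegree hb
      rw [aux_intDegree b hb0, RatFunc.intDegree_X] at h1
      have h2 : (p : ℤ) ∣ 1 := ⟨b.intDegree, h1.symm⟩
      have h3 : (p : ℤ) ≤ 1 := Int.le_of_dvd one_pos h2
      have := hp.two_le
      omega
  have H : Irreducible (X ^ p - C (RatFunc.X : F)) :=
    X_pow_sub_C_irreducible_of_prime hp hX
  -- u is integral with minimal polynomial X^p - C X
  have haeval : (aeval u) (X ^ p - C (RatFunc.X : F)) = 0 := by
    rw [map_sub, map_pow, aeval_X, aeval_C, hu, sub_self]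
  have hmonic : (X ^ p - C (RatFunc.X : F)).Monic := monic_X_pow_sub_C _ hp.pos.ne'
  have hintu : IsIntegral F u := ⟨X ^ p - C (RatFunc.X : F), hmonic, haeval⟩
  have hminu : minpoly F u = X ^ p - C (RatFunc.X : F) :=
    (minpoly.eq_of_irreducible_of_monic H haeval hmonic).symm
  -- finite dimensionality and degree
  haveI hfd1 : FiniteDimensional F (IntermediateField.adjoin F {u}) :=
    IntermediateField.adjoin.finiteDimensional hintu
  haveI hfd2 : FiniteDimensional F (⊤ : IntermediateField F K) := hgen ▸ hfd1
  haveI hfd : FiniteDimensional F K :=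
    (IntermediateField.topEquiv (F := F) (E := K)).toLinearEquiv.finiteDimensional
  have hfr : Module.finrank F K = p := by
    have h1 : Module.finrank F (IntermediateField.adjoin F {u}) = p := by
      rw [IntermediateField.adjoin.finrank hintu, hminu, natDegree_X_pow_sub_C]
    have h2 : Module.finrank F (⊤ : IntermediateField F K) = Module.finrank F K :=
      (IntermediateField.topEquiv (F := F) (E := K)).toLinearEquiv.finrank_eq
    rw [← h2, ← hgen, h1]
  -- splitting field instance
  haveI hsplit : IsSplittingField F K (X ^ p - C (RatFunc.X : F)) := by
    have := isSplittingField_X_pow_sub_C_of_root_adjoin_eq_top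
      (K := F) (L := K) (a := RatFunc.X) (α := u)
      (by rw [hfr]; exact hζne) (by rw [hfr]; exact hu) hgen
    rwa [hfr] at this
  haveI hgal : IsGalois F K := isGalois_of_isSplittingField_X_pow_sub_C hζne H K
  haveI hcyc : IsCyclic (K ≃ₐ[F] K) := isCyclic_of_isSplittingField_X_pow_sub_C hζne H K
  refine ⟨hgal, hfr, hcyc, ⟨_, hζ0⟩, ?_⟩
  rintro ζ hζprim ⟨x, hx⟩
  have hu' : u ^ p = algebraMap F K RatFunc.X := hu
  have hx' : Algebra.norm F x = ζ := hx
  -- ζ comes from L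
  obtain ⟨i, hip, hi⟩ := hζ0.eq_pow_of_pow_eq_one hζprim.pow_eq_one
  set ζt : L := ζ' ^ i with hζtdef
  have hζF : algebraMap L F ζt = ζ := by rw [hζtdef, map_pow]; exact hi
  have hζt : IsPrimitiveRoot ζt p :=
    IsPrimitiveRoot.of_map_of_injective
      (by rw [hζF]; exact hζprim) (algebraMap L F).injective
  clear_value ζt
  -- algebra L K
  letI : Algebra L K := ((algebraMap F K).comp (algebraMap L F)).toAlgebra
  haveI : IsScalarTower L F K := IsScalarTower.of_algebraMap_eq fun c => rfl
  -- u is transcendental over L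
  have hXtrans : Transcendental L (RatFunc.X : F) := by
    have h1 : Transcendental L (Polynomial.X : L[X]) := Polynomial.transcendental_X L
    have h2 := (transcendental_algebraMap_iff (R := L) (S := L[X]) (A := F)
      (RatFunc.algebraMap_injective L)).mpr h1
    rwa [RatFunc.algebraMap_X] at h2
  have hutrans : Transcendental L u := by
    have h2 : Transcendental L (u ^ p) := by
      rw [hu]
      exact (transcendental_algebraMap_iff (algebraMap F K).injective).mpr hXtrans
    have h3 : Transcendental L ((Polynomial.aeval u) ((X : L[X]) ^ p)) := by
      rwa [map_pow, aeval_X]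
    exact (transcendental_aeval_iff.mp h3).1
  set θ : L[X] →ₐ[L] K := Polynomial.aeval u with hθdef
  have hθinj : Function.Injective θ := transcendental_iff_injective.mp hutrans
  have hθX : θ X = u := aeval_X u
  -- commutation with `algebraMap L[X] F`
  have hcomm : ∀ P : L[X], algebraMap F K (algebraMap L[X] F P) = θ (P.comp (X ^ p)) := by
    have hhom : ((algebraMap F K).comp (algebraMap L[X] F)) =
        (θ.toRingHom).comp ((Polynomial.aeval (X ^ p : L[X])).toRingHom : L[X] →+* L[X]) := by
      apply Polynomial.ringHom_ext
      · intro s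
        simp only [RingHom.comp_apply, AlgHom.toRingHom_eq_coe, RingHom.coe_coe, aeval_C]
        rw [← Polynomial.algebraMap_eq, ← IsScalarTower.algebraMap_apply L L[X] F,
          AlgHom.commutes, IsScalarTower.algebraMap_apply L F K]
      · simp only [RingHom.comp_apply, AlgHom.toRingHom_eq_coe, RingHom.coe_coe, aeval_X,
          map_pow, hθX]
        rw [show (algebraMap L[X] F) X = (RatFunc.X : F) from RatFunc.algebraMap_X]
        exact hu'.symm
    intro P
    have h4 := congrArg (fun f : L[X] →+* K => f P) hhom
    simpa [comp_eq_aeval] using h4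
  -- representation of elements of K
  have hrep : ∀ y : K, ∃ A B : L[X], θ B ≠ 0 ∧ y * θ B = θ A := by
    intro y
    have hy : y ∈ IntermediateField.adjoin F {u} := by rw [hgen]; trivial
    induction hy using IntermediateField.adjoin_induction with
    | mem z hz =>
      rw [Set.mem_singleton_iff] at hz
      subst hz
      exact ⟨X, 1, by simp, by simp [hθX]⟩
    | algebraMap f =>
      have hden : algebraMap L[X] F f.denom ≠ 0 :=
        (map_ne_zero_iff _ (RatFunc.algebraMap_injective L)).mpr (RatFunc.denom_ne_zero f)
      refine ⟨f.num.comp (X ^ p), f.denom.comp (X ^ p), ?_, ?_⟩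
      · rw [← hcomm]
        exact (map_ne_zero_iff _ (algebraMap F K).injective).mpr hden
      · rw [← hcomm, ← hcomm, ← map_mul]
        congr 1
        rw [eq_comm, ← div_eq_iff hden]
        exact RatFunc.num_div_denom f
    | add z w _ _ ih1 ih2 =>
      obtain ⟨A, B, hB, hzB⟩ := ih1
      obtain ⟨A', B', hB', hwB⟩ := ih2
      refine ⟨A * B' + A' * B, B * B', by rw [map_mul]; exact mul_ne_zero hB hB', ?_⟩
      rw [map_mul, map_add, map_mul, map_mul]
      calc (z + w) * (θ B * θ B') = (z * θ B) * θ B' + (w * θ B') * θ B := by ring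
        _ = θ A * θ B' + θ A' * θ B := by rw [hzB, hwB]
    | inv z _ ih =>
      obtain ⟨A, B, hB, hzB⟩ := ih
      by_cases hz0 : z = 0
      · exact ⟨0, 1, by simp, by simp [hz0]⟩
      · refine ⟨B, A, by rw [← hzB]; exact mul_ne_zero hz0 hB, ?_⟩
        rw [← hzB, ← mul_assoc, inv_mul_cancel₀ hz0, one_mul]
    | mul z w _ _ ih1 ih2 =>
      obtain ⟨A, B, hB, hzB⟩ := ih1
      obtain ⟨A', B', hB', hwB⟩ := ih2
      refine ⟨A * A', B * B', by rw [map_mul]; exact mul_ne_zero hB hB', ?_⟩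
      rw [map_mul, map_mul]
      calc (z * w) * (θ B * θ B') = (z * θ B) * (w * θ B') := by ring
        _ = θ A * θ A' := by rw [hzB, hwB]
  -- x is nonzero, get a good representation
  have hζne0 : ζ ≠ 0 := fun h =>
    one_ne_zero' F (by rw [← hζprim.pow_eq_one, h, zero_pow hp.pos.ne'])
  have hx0 : x ≠ 0 := by
    rintro rfl
    rw [Algebra.norm_zero] at hx
    exact hζne0 hx.symm
  obtain ⟨A, B, hB, hxB⟩ := hrep x
  have hBne : B ≠ 0 := fun h => hB (by rw [h, map_zero])
  have hAK : θ A ≠ 0 := by rw [← hxB]; exact mul_ne_zero hx0 hB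
  have hAne : A ≠ 0 := fun h => hAK (by rw [h, map_zero])
  obtain ⟨a, G, hG0, hGfact⟩ := aux_factor A hAne
  obtain ⟨b, Hq, hH0, hHfact⟩ := aux_factor B hBne
  -- description of automorphisms
  set e := autEquivZmod H K hζ0 with hedef
  have hσcomm : ∀ (σ : K ≃ₐ[F] K) (Q : L[X]), σ (θ Q) = Polynomial.aeval (σ u) Q := by
    intro σ Q
    have h5 := Polynomial.aeval_algHom_apply
      (⟨(σ : K →ₐ[F] K).toRingHom, fun c => σ.commutes (algebraMap L F c)⟩ : K →ₐ[L] K) u Q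
    exact h5.symm
  have hτu : ∀ m : ZMod p, (e.symm (Multiplicative.ofAdd m)) u
      = algebraMap L K (ζ' ^ m.val) * u := by
    intro m
    have h1 := autEquivZmod_symm_apply_natCast H K hu hζ0 m.val
    rw [ZMod.natCast_rightInverse m] at h1
    rw [hedef, h1, Algebra.smul_def]
    congr 1
    rw [map_pow, map_pow, IsScalarTower.algebraMap_apply L F K]
  have hτθ : ∀ (m : ZMod p) (Q : L[X]), (e.symm (Multiplicative.ofAdd m)) (θ Q)
      = θ (Q.comp (C (ζ' ^ m.val) * X)) := by
    intro m Q
    rw [hσcomm, hτu, hθdef, aeval_comp]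
    congr 1
    simp
  -- the norm of θ Q
  have hnormθ : ∀ Q : L[X], algebraMap F K (Algebra.norm F (θ Q))
      = θ (∏ m : ZMod p, Q.comp (C (ζ' ^ m.val) * X)) := by
    intro Q
    rw [Algebra.norm_eq_prod_automorphisms]
    calc (∏ σ : K ≃ₐ[F] K, σ (θ Q))
        = ∏ m' : Multiplicative (ZMod p), (e.symm m') (θ Q) :=
          (Equiv.prod_comp e.symm.toEquiv fun σ : K ≃ₐ[F] K => σ (θ Q)).symm
      _ = ∏ m : ZMod p, (e.symm (Multiplicative.ofAdd m)) (θ Q) :=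
          (Equiv.prod_comp Multiplicative.ofAdd
            (fun m' : Multiplicative (ZMod p) => (e.symm m') (θ Q))).symm
      _ = ∏ m : ZMod p, θ (Q.comp (C (ζ' ^ m.val) * X)) :=
          Finset.prod_congr rfl fun m _ => hτθ m Q
      _ = θ (∏ m : ZMod p, Q.comp (C (ζ' ^ m.val) * X)) := (map_prod θ _ _).symm
  set c : L := ∏ m : ZMod p, ζ' ^ m.val with hcdef
  set ΦG : L[X] := ∏ m : ZMod p, G.comp (C (ζ' ^ m.val) * X) with hPGdef
  set ΦH : L[X] := ∏ m : ZMod p, Hq.comp (C (ζ' ^ m.val) * X) with hPHdef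
  have hNu : algebraMap F K (Algebra.norm F u) = θ (C c * X ^ p) := by
    have h1 := hnormθ X
    rw [hθX] at h1
    rw [h1]
    congr 1
    simp only [X_comp]
    rw [Finset.prod_mul_distrib, Finset.prod_const, Finset.card_univ, ZMod.card, hcdef,
      map_prod]
  have hζtK : algebraMap F K ζ = θ (C ζt) := by
    rw [← hζF, hθdef, aeval_C]
    exact IsScalarTower.algebraMap_apply L F K ζt
  -- master equation
  have hmaster0 : Algebra.norm F x * Algebra.norm F u ^ b * Algebra.norm F (θ Hq)
      = Algebra.norm F u ^ a * Algebra.norm F (θ G) := by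
    have hθB : θ B = u ^ b * θ Hq := by rw [hHfact, map_mul, map_pow, hθX]
    have hθA : θ A = u ^ a * θ G := by rw [hGfact, map_mul, map_pow, hθX]
    have h1 : x * (u ^ b * θ Hq) = u ^ a * θ G := by rw [← hθB, ← hθA]; exact hxB
    have h2 := congrArg (Algebra.norm F) h1
    simpa [map_mul, map_pow, mul_assoc] using h2
  have hpoly : C ζt * (C c * X ^ p) ^ b * ΦH = (C c * X ^ p) ^ a * ΦG := by
    have h2 := congrArg (algebraMap F K) hmaster0
    rw [map_mul, map_mul, map_mul, map_pow, map_pow, hx', hζtK, hNu, hnormθ, hnormθ] at h2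
    rw [← hPGdef, ← hPHdef] at h2
    rw [← map_pow θ, ← map_pow θ, ← map_mul θ, ← map_mul θ, ← map_mul θ] at h2
    exact hθinj h2
  have hpoly2 : X ^ (p * b) * (C (ζt * c ^ b) * ΦH) = X ^ (p * a) * (C (c ^ a) * ΦG) := by
    rw [C_mul, C_pow, C_pow, pow_mul, pow_mul]
    rw [mul_pow, mul_pow] at hpoly
    linear_combination hpoly
  -- evaluations at 0
  have hζ'ne : (ζ' : L) ≠ 0 := hζ'.ne_zero hp.pos.ne'
  have hcne : c ≠ 0 := by
    rw [hcdef]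
    exact Finset.prod_ne_zero_iff.mpr fun m _ => pow_ne_zero _ hζ'ne
  have hζtne : ζt ≠ 0 := hζt.ne_zero hp.pos.ne'
  have hΦHeval : ΦH.eval 0 = Hq.eval 0 ^ p := by
    rw [hPHdef, Polynomial.eval_prod]
    have h6 : ∀ m : ZMod p, (Hq.comp (C (ζ' ^ m.val) * X)).eval 0 = Hq.eval 0 := by
      intro m; simp [eval_comp]
    rw [Finset.prod_congr rfl fun m _ => h6 m, Finset.prod_const, Finset.card_univ, ZMod.card]
  have hΦGeval : ΦG.eval 0 = G.eval 0 ^ p := by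
    rw [hPGdef, Polynomial.eval_prod]
    have h6 : ∀ m : ZMod p, (G.comp (C (ζ' ^ m.val) * X)).eval 0 = G.eval 0 := by
      intro m; simp [eval_comp]
    rw [Finset.prod_congr rfl fun m _ => h6 m, Finset.prod_const, Finset.card_univ, ZMod.card]
  obtain ⟨hab, heq⟩ := aux_cancel (p * b) (p * a) _ _
    (by
      rw [eval_mul, eval_C, hΦHeval]
      exact mul_ne_zero (mul_ne_zero hζtne (pow_ne_zero _ hcne)) (pow_ne_zero _ hH0))
    (by
      rw [eval_mul, eval_C, hΦGeval]
      exact mul_ne_zero (pow_ne_zero _ hcne) (pow_ne_zero _ hG0))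
    hpoly2
  have hba : b = a := Nat.eq_of_mul_eq_mul_left hp.pos hab
  subst hba
  have heval := congrArg (Polynomial.eval 0) heq
  rw [eval_mul, eval_mul, eval_C, eval_C, hΦHeval, hΦGeval] at heval
  -- cancel c ^ b and conclude that ζt is a p-th power in L
  have hfin : ζt * Hq.eval 0 ^ p = G.eval 0 ^ p := by
    have h7 : c ^ b * (ζt * Hq.eval 0 ^ p) = c ^ b * G.eval 0 ^ p := by
      linear_combination heval
    exact mul_left_cancel₀ (pow_ne_zero _ hcne) h7
  exact aux_not_pow p hp ζt hζt (G.eval 0 / Hq.eval 0)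
    (by rw [div_pow, div_eq_iff (pow_ne_zero _ hH0)]; linear_combination -hfin)
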